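/- Let q = 2^t with gcd(i, t) = 1, n, t, i > 0 integers, γ ∈ F_{q^2} nonzero, and f(X) = γX + Tr_{q^{2n}/q}(X^{2^i(q+1)}) over F_{q^{2n}}. For every c ∈ F_{q^{2n}} \ F_{q^2} and every a, b ∈ F_{q^{2n}}, the equation f(X + a) + c·f(X) = b has at most two solutions X ∈ F_{q^{2n}}; i.e., the c-differential uniformity of f is at most 2. -/

import Mathlib

open Finset

/-- `gcd(2^i - 1, 2^t - 1) = 1` when `gcd(i,t) = 1`. -/
lemma aux_mersenne_coprime {i t : ℕ} (h : Nat.gcd i t = 1) :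
    Nat.gcd (2 ^ i - 1) (2 ^ t - 1) = 1 := by
  set d := Nat.gcd (2 ^ i - 1) (2 ^ t - 1) with hd
  have h1 : d ∣ 2 ^ i - 1 := Nat.gcd_dvd_left _ _
  have h2 : d ∣ 2 ^ t - 1 := Nat.gcd_dvd_right _ _
  have hpow : ∀ k : ℕ, d ∣ 2 ^ k - 1 → (2 : ZMod d) ^ k = 1 := by
    intro k hk
    have h1le : 1 ≤ 2 ^ k := Nat.one_le_two_pow
    have h0 : ((2 ^ k - 1 : ℕ) : ZMod d) = 0 := (ZMod.natCast_eq_zero_iff _ _).mpr hk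
    rw [Nat.cast_sub h1le] at h0
    push_cast at h0
    linear_combination h0
  have e3 : (2 : ZMod d) ^ Nat.gcd i t = 1 := pow_gcd_eq_one.mpr ⟨hpow i h1, hpow t h2⟩
  rw [h, pow_one] at e3
  have h1' : ((1 : ℕ) : ZMod d) = 0 := by push_cast; linear_combination e3
  exact Nat.dvd_one.mp ((ZMod.natCast_eq_zero_iff _ _).mp h1')

/-- If any three elements of a type collide pairwise, its cardinality is at most 2. -/
lemma aux_card_le_two {α : Type*} [Finite α]
    (h : ∀ x y z : α, x = y ∨ x = z ∨ y = z) : Nat.card α ≤ 2 := by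
  by_contra hlt
  push_neg at hlt
  have : Fintype α := Fintype.ofFinite α
  rw [Nat.card_eq_fintype_card] at hlt
  obtain ⟨x, y, z, hxy, hxz, hyz⟩ := Fintype.two_lt_card_iff.mp hlt
  rcases h x y z with h' | h' | h' <;> tauto

/-- With `gcd(i,t) = 1`, `f(X) = γX + Tr_{q^{2n}/q}(X^{2^i(q+1)})` has
c-differential uniformity at most `2` for all `c ∈ F_{q^{2n}} \ F_{q^2}`. -/
theorem stmt_4 {F : Type*} [Field F] [Fintype F] (t n i : ℕ)
    (ht : 0 < t) (hn : 0 < n) (hi : 0 < i) (hgcd : Nat.gcd i t = 1)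
    (hcard : Fintype.card F = (2 ^ t) ^ (2 * n))
    (Tr : F → F) (hTr : ∀ x, Tr x = ∑ j ∈ Finset.range (2 * n), x ^ ((2 ^ t) ^ j))
    (γ : F) (hγ : γ ≠ 0) (hγq2 : γ ^ ((2 ^ t) ^ 2) = γ)
    (f : F → F) (hf : ∀ X, f X = γ * X + Tr (X ^ (2 ^ i * (2 ^ t + 1))))
    (c : F) (hc : c ^ ((2 ^ t) ^ 2) ≠ c) :
    ∀ a b : F, Nat.card {X : F // f (X + a) + c * f X = b} ≤ 2 := by
  intro a b
  -- characteristic 2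
  have hchar2 : CharP F 2 := by
    set p := ringChar F with hp
    haveI hcp : CharP F p := ringChar.charP F
    have hprime : p.Prime := CharP.char_is_prime F p
    obtain ⟨m, _, hm⟩ := FiniteField.card F p
    have h2 : p ^ (m : ℕ) = 2 ^ (t * (2 * n)) := by
      rw [← hm, hcard, ← pow_mul]
    have hpd : p ∣ 2 := by
      have : p ∣ 2 ^ (t * (2 * n)) := h2 ▸ dvd_pow_self p m.2.ne'
      exact hprime.dvd_of_dvd_pow this
    have : p = 2 := (Nat.prime_dvd_prime_iff_eq hprime Nat.prime_two).mp hpd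
    rw [← this]; exact hcp
  haveI := hchar2
  haveI : Fact (Nat.Prime 2) := ⟨Nat.prime_two⟩
  haveI : ExpChar F 2 := ExpChar.prime Nat.prime_two
  have htwo : (2 : F) = 0 := by exact_mod_cast CharP.cast_eq_zero F 2
  set Q : ℕ := 2 ^ t with hQdef
  set II : ℕ := 2 ^ i with hIIdef
  set E : ℕ := II * (Q + 1) with hEdef
  -- frobenius lemmas
  have frob : ∀ (k : ℕ) (x y : F), (x + y) ^ 2 ^ k = x ^ 2 ^ k + y ^ 2 ^ k := by
    intro k x y; exact add_pow_char_pow ..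
  have frobQ : ∀ x y : F, (x + y) ^ Q = x ^ Q + y ^ Q := by
    intro x y; rw [hQdef]; exact frob t x y
  have frobI : ∀ x y : F, (x + y) ^ II = x ^ II + y ^ II := by
    intro x y; rw [hIIdef]; exact frob i x y
  have hQj : ∀ j : ℕ, Q ^ j = 2 ^ (t * j) := by
    intro j; rw [hQdef, pow_mul]
  have frobQj : ∀ (j : ℕ) (x y : F), (x + y) ^ Q ^ j = x ^ Q ^ j + y ^ Q ^ j := by
    intro j x y; rw [hQj]; exact frob _ x y
  -- trace lemmas
  have trAdd : ∀ x y : F, Tr (x + y) = Tr x + Tr y := by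
    intro x y
    rw [hTr, hTr, hTr, ← Finset.sum_add_distrib]
    exact Finset.sum_congr rfl fun j _ => frobQj j x y
  have powcard : ∀ x : F, x ^ Q ^ (2 * n) = x := by
    intro x
    have := FiniteField.pow_card x
    rwa [hcard] at this
  have trQ : ∀ x : F, Tr (x ^ Q) = Tr x := by
    intro x
    rw [hTr, hTr]
    have step : ∀ j : ℕ, (x ^ Q) ^ Q ^ j = x ^ Q ^ (j + 1) := by
      intro j; rw [← pow_mul, ← pow_succ']
    rw [Finset.sum_congr rfl fun j _ => step j]
    have h1 := Finset.sum_range_succ' (fun j => x ^ Q ^ j) (2 * n)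
    have h2 := Finset.sum_range_succ (fun j => x ^ Q ^ j) (2 * n)
    have h3 : x ^ Q ^ (2 * n) = x ^ Q ^ 0 := by rw [powcard, pow_zero, pow_one]
    rw [h3] at h2
    rw [h2] at h1
    exact (add_right_cancel h1).symm
  have trFrob : ∀ (k : ℕ) (x : F), (Tr x) ^ 2 ^ k = Tr (x ^ 2 ^ k) := by
    intro k x
    rw [hTr, hTr, sum_pow_char_pow]
    exact Finset.sum_congr rfl fun j _ => pow_right_comm x _ _
  have trFixQ : ∀ x : F, (Tr x) ^ Q = Tr x := by
    intro x; rw [hQdef, trFrob t x, ← hQdef, trQ]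
  have trFrobI : ∀ x : F, (Tr x) ^ II = Tr (x ^ II) := by
    intro x; rw [hIIdef]; exact trFrob i x
  have fixpow : ∀ (g : F), g ^ Q = g → ∀ j : ℕ, g ^ Q ^ j = g := by
    intro g hg j
    induction j with
    | zero => rw [pow_zero, pow_one]
    | succ k ih => rw [pow_succ, pow_mul, ih, hg]
  have trSmul : ∀ (g x : F), g ^ Q = g → Tr (g * x) = g * Tr x := by
    intro g x hg
    rw [hTr, hTr, Finset.mul_sum]
    refine Finset.sum_congr rfl fun j _ => ?_
    rw [mul_pow, fixpow g hg j]
  have trConst : ∀ g : F, g ^ Q = g → Tr g = 0 := by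
    intro g hg
    rw [hTr]
    rw [Finset.sum_congr rfl fun j _ => fixpow g hg j, Finset.sum_const, Finset.card_range]
    rw [nsmul_eq_mul]
    push_cast
    rw [htwo]
    ring
  have trPair : ∀ y : F, Tr (y ^ II) + Tr ((y ^ Q) ^ II) = 0 := by
    intro y
    rw [pow_right_comm y Q II, trQ]
    exact CharTwo.add_self_eq_zero _
  have trPairS : ∀ (y s : F), s ^ Q = s → Tr ((y * s) ^ II) + Tr ((y ^ Q * s) ^ II) = 0 := by
    intro y s hs
    have hsfix : (s ^ II) ^ Q = s ^ II := by rw [pow_right_comm, hs]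
    rw [mul_pow, mul_pow, mul_comm (y ^ II), mul_comm ((y ^ Q) ^ II),
      trSmul _ _ hsfix, trSmul _ _ hsfix, ← mul_add]
    rw [trPair y, mul_zero]
  -- basic constants
  have hc1 : c ≠ 1 := by intro h; apply hc; rw [h, one_pow]
  have hcc : (1 : F) + c ≠ 0 := by
    intro h
    apply hc1
    linear_combination h - htwo
  set δ : F := γ * (1 + c) with hδdef
  have hδ : δ ≠ 0 := mul_ne_zero hγ hcc
  have hγQQ : γ ^ (Q * Q) = γ := by rw [← pow_two]; exact hγq2
  have hγinvQ2 : (γ⁻¹) ^ (Q * Q) = γ⁻¹ := by rw [inv_pow, hγQQ]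
  -- expansion of (X+Y)^E
  have expand : ∀ X Y : F,
      (X + Y) ^ E = X ^ E + ((Y * X ^ Q) ^ II + ((Y ^ Q * X) ^ II + Y ^ E)) := by
    intro X Y
    have h1 : (X + Y) ^ (Q + 1) = X ^ (Q + 1) + (Y * X ^ Q + (Y ^ Q * X + Y ^ (Q + 1))) := by
      rw [pow_succ (X + Y) Q, frobQ X Y, pow_succ X Q, pow_succ Y Q]; ring
    have h2 : ∀ z : F, z ^ E = (z ^ (Q + 1)) ^ II := by
      intro z; rw [hEdef, mul_comm, pow_mul]
    rw [h2, h2 X, h2 Y, h1, frobI, frobI, frobI]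
  set vv : F → F := fun X => Tr ((a * X ^ Q) ^ II) + Tr ((a ^ Q * X) ^ II) with hvv
  have vvEq : ∀ X : F, vv X = Tr ((a * X ^ Q) ^ II) + Tr ((a ^ Q * X) ^ II) := by
    intro X; simp only [hvv]
  have vvFix : ∀ X : F, (vv X) ^ Q = vv X := by
    intro X; rw [vvEq, frobQ, trFixQ, trFixQ]
  have vvAdd : ∀ x y : F, vv (x + y) = vv x + vv y := by
    intro x y
    rw [vvEq, vvEq, vvEq, frobQ, mul_add, frobI, mul_add, frobI, trAdd, trAdd]
    ring
  -- the parametrization of a solution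
  have param : ∀ X : F, f (X + a) + c * f X = b →
      δ * X = (b + γ * a + Tr (a ^ E)) + ((1 + c) * Tr (X ^ E) + vv X) := by
    intro X hX
    rw [hf, hf, expand X a, trAdd, trAdd, trAdd] at hX
    rw [vvEq]
    linear_combination hX - (γ * a + Tr (a ^ E) + (1 + c) * Tr (X ^ E)
      + Tr ((a * X ^ Q) ^ II) + Tr ((a ^ Q * X) ^ II)) * htwo
  -- difference of two parametrizations
  have keyd : ∀ X1 X2 : F, f (X1 + a) + c * f X1 = b → f (X2 + a) + c * f X2 = b →
      δ * (X1 + X2) = (1 + c) * (Tr (X1 ^ E) + Tr (X2 ^ E)) + (vv X1 + vv X2) := by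
    intro X1 X2 h1 h2
    have p1 := param X1 h1
    have p2 := param X2 h2
    linear_combination p1 + p2 + (b + γ * a + Tr (a ^ E)) * htwo
  -- key lemma 1: equal vv forces equal solutions
  have key1 : ∀ X1 X2 : F, f (X1 + a) + c * f X1 = b → f (X2 + a) + c * f X2 = b →
      vv X1 = vv X2 → X1 = X2 := by
    intro X1 X2 h1 h2 hv
    have hd := keyd X1 X2 h1 h2
    obtain ⟨s, hsdef⟩ : ∃ s : F, s = Tr (X1 ^ E) + Tr (X2 ^ E) := ⟨_, rfl⟩
    rw [← hsdef, hv, CharTwo.add_self_eq_zero, add_zero] at hd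
    have hs : s ^ Q = s := by rw [hsdef, frobQ, trFixQ, trFixQ]
    have hYs : γ * (X1 + X2) = s := by
      refine mul_left_cancel₀ hcc ?_
      rw [hδdef] at hd
      linear_combination hd
    have hYval : X1 + X2 = γ⁻¹ * s := by
      refine mul_left_cancel₀ hγ ?_
      rw [hYs]
      field_simp
    have hsum : X1 ^ E + X2 ^ E = ((γ⁻¹ * s) * X1 ^ Q) ^ II
        + (((γ⁻¹ * s) ^ Q * X1) ^ II + (γ⁻¹ * s) ^ E) := by
      have h' := expand X1 (X1 + X2)
      have hX2 : X1 + (X1 + X2) = X2 := by linear_combination X1 * htwo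
      rw [hX2, hYval] at h'
      linear_combination h' + X1 ^ E * htwo
    have hstep : Tr (X1 ^ E) + Tr (X2 ^ E) = Tr (((γ⁻¹ * s) * X1 ^ Q) ^ II)
        + (Tr (((γ⁻¹ * s) ^ Q * X1) ^ II) + Tr ((γ⁻¹ * s) ^ E)) := by
      rw [← trAdd, hsum, trAdd, trAdd]
    have hs2 := hsdef.trans hstep
    have e1 : (γ⁻¹ * s) * X1 ^ Q = ((γ⁻¹) ^ Q * X1) ^ Q * s := by
      rw [mul_pow, ← pow_mul, hγinvQ2]
      ring
    have e2 : (γ⁻¹ * s) ^ Q * X1 = ((γ⁻¹) ^ Q * X1) * s := by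
      rw [mul_pow, hs]
      ring
    have e3 : (γ⁻¹ * s) ^ E = (s * s) ^ II * ((γ⁻¹) ^ (Q + 1)) ^ II := by
      rw [hEdef, mul_comm II (Q + 1), pow_mul, mul_pow, pow_succ s Q, hs]
      ring
    have hgfix : ((γ⁻¹) ^ (Q + 1)) ^ Q = (γ⁻¹) ^ (Q + 1) := by
      rw [← pow_mul]
      have he : (Q + 1) * Q = Q * Q + Q := by ring
      rw [he, pow_add, hγinvQ2, ← pow_succ']
    have hgI : (((γ⁻¹) ^ (Q + 1)) ^ II) ^ Q = ((γ⁻¹) ^ (Q + 1)) ^ II := by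
      rw [pow_right_comm, hgfix]
    have hsfix : ((s * s) ^ II) ^ Q = (s * s) ^ II := by
      rw [pow_right_comm, mul_pow, hs]
    rw [e1, e2, e3, trSmul _ _ hsfix, trConst _ hgI, mul_zero, add_zero] at hs2
    have hp := trPairS ((γ⁻¹) ^ Q * X1) s hs
    have hszero : s = 0 := by linear_combination hs2 + hp
    rw [hszero, mul_zero] at hYval
    linear_combination hYval - X2 * htwo
  -- key lemma 2 : vv-differences satisfy r = μ r^II
  set μ : F := Tr ((a * (δ⁻¹) ^ Q) ^ II) + Tr ((a ^ Q * δ⁻¹) ^ II) with hμ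
  have key2 : ∀ X1 X2 : F, f (X1 + a) + c * f X1 = b → f (X2 + a) + c * f X2 = b →
      vv X1 + vv X2 = μ * (vv X1 + vv X2) ^ II := by
    intro X1 X2 h1 h2
    have hd := keyd X1 X2 h1 h2
    obtain ⟨s, hsdef⟩ : ∃ s : F, s = Tr (X1 ^ E) + Tr (X2 ^ E) := ⟨_, rfl⟩
    obtain ⟨r, hrdef⟩ : ∃ r : F, r = vv X1 + vv X2 := ⟨_, rfl⟩
    rw [← hsdef, ← hrdef] at hd
    rw [← hrdef]
    have hs : s ^ Q = s := by rw [hsdef, frobQ, trFixQ, trFixQ]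
    have hr : r ^ Q = r := by rw [hrdef, frobQ, vvFix, vvFix]
    have hYval : X1 + X2 = γ⁻¹ * s + δ⁻¹ * r := by
      refine mul_left_cancel₀ hδ ?_
      rw [hd, hδdef]
      field_simp
    have hrY : r = vv (γ⁻¹ * s) + vv (δ⁻¹ * r) :=
      calc r = vv X1 + vv X2 := hrdef
        _ = vv (X1 + X2) := (vvAdd X1 X2).symm
        _ = vv (γ⁻¹ * s + δ⁻¹ * r) := by rw [hYval]
        _ = _ := vvAdd _ _
    have hvvs : vv (γ⁻¹ * s) = 0 := by
      rw [vvEq]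
      have e1 : a * (γ⁻¹ * s) ^ Q = (a * (γ⁻¹) ^ Q) * s := by
        rw [mul_pow, hs]
        ring
      have e2 : a ^ Q * (γ⁻¹ * s) = (a * (γ⁻¹) ^ Q) ^ Q * s := by
        rw [mul_pow, ← pow_mul, hγinvQ2]
        ring
      rw [e1, e2]
      have hp := trPairS (a * (γ⁻¹) ^ Q) s hs
      linear_combination hp
    have hvvr : vv (δ⁻¹ * r) = μ * r ^ II := by
      rw [vvEq, hμ]
      have hrII : (r ^ II) ^ Q = r ^ II := by rw [pow_right_comm, hr]
      have e1 : (a * (δ⁻¹ * r) ^ Q) ^ II = r ^ II * (a * (δ⁻¹) ^ Q) ^ II := by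
        rw [mul_pow δ⁻¹ r, hr,
          show a * ((δ⁻¹) ^ Q * r) = r * (a * (δ⁻¹) ^ Q) from by ring, mul_pow]
      have e2 : (a ^ Q * (δ⁻¹ * r)) ^ II = r ^ II * (a ^ Q * δ⁻¹) ^ II := by
        rw [show a ^ Q * (δ⁻¹ * r) = r * (a ^ Q * δ⁻¹) from by ring, mul_pow]
      rw [e1, e2, trSmul _ _ hrII, trSmul _ _ hrII]
      ring
    conv_lhs => rw [hrY]
    rw [hvvs, hvvr, zero_add]
  -- pairwise collision of any three solutions
  have main : ∀ X1 X2 X3 : F,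
      f (X1 + a) + c * f X1 = b → f (X2 + a) + c * f X2 = b → f (X3 + a) + c * f X3 = b →
      X1 = X2 ∨ X1 = X3 ∨ X2 = X3 := by
    intro X1 X2 X3 h1 h2 h3
    by_cases e12 : vv X1 = vv X2
    · exact Or.inl (key1 X1 X2 h1 h2 e12)
    by_cases e13 : vv X1 = vv X3
    · exact Or.inr (Or.inl (key1 X1 X3 h1 h3 e13))
    · refine Or.inr (Or.inr (key1 X2 X3 h2 h3 ?_))
      obtain ⟨r12, hr12⟩ : ∃ r : F, r = vv X1 + vv X2 := ⟨_, rfl⟩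
      obtain ⟨r13, hr13⟩ : ∃ r : F, r = vv X1 + vv X3 := ⟨_, rfl⟩
      have h12 : r12 = μ * r12 ^ II := by rw [hr12]; exact key2 X1 X2 h1 h2
      have h13 : r13 = μ * r13 ^ II := by rw [hr13]; exact key2 X1 X3 h1 h3
      have n12 : r12 ≠ 0 := by
        intro h0
        apply e12
        rw [hr12] at h0
        linear_combination h0 - vv X2 * htwo
      have n13 : r13 ≠ 0 := by
        intro h0
        apply e13
        rw [hr13] at h0
        linear_combination h0 - vv X3 * htwo
      have hcross : r12 * r13 ^ II = r13 * r12 ^ II := by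
        conv_lhs => rw [h12]
        conv_rhs => rw [h13]
        ring
      obtain ⟨w, hwdef⟩ : ∃ w : F, w = r12 * r13⁻¹ := ⟨_, rfl⟩
      have hw0 : w ≠ 0 := by rw [hwdef]; exact mul_ne_zero n12 (inv_ne_zero n13)
      have hwI : w ^ II = w := by
        rw [hwdef, mul_pow, inv_pow]
        rw [mul_inv_eq_iff_eq_mul₀ (pow_ne_zero II n13)]
        field_simp
        linear_combination -hcross
      have hQfix12 : r12 ^ Q = r12 := by rw [hr12, frobQ, vvFix, vvFix]
      have hQfix13 : r13 ^ Q = r13 := by rw [hr13, frobQ, vvFix, vvFix]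
      have hwQ : w ^ Q = w := by
        rw [hwdef, mul_pow, inv_pow, hQfix12, hQfix13]
      have hII1 : w ^ (II - 1) = 1 := by
        have hIIpos : 1 ≤ II := Nat.one_le_two_pow
        have hh : w ^ (II - 1) * w = 1 * w := by
          rw [one_mul, ← pow_succ, Nat.sub_add_cancel hIIpos, hwI]
        exact mul_right_cancel₀ hw0 hh
      have hQ1 : w ^ (Q - 1) = 1 := by
        have hQpos : 1 ≤ Q := Nat.one_le_two_pow
        have hh : w ^ (Q - 1) * w = 1 * w := by
          rw [one_mul, ← pow_succ, Nat.sub_add_cancel hQpos, hwQ]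
        exact mul_right_cancel₀ hw0 hh
      have hgcd1 : w ^ Nat.gcd (II - 1) (Q - 1) = 1 := pow_gcd_eq_one.mpr ⟨hII1, hQ1⟩
      rw [hIIdef, hQdef, aux_mersenne_coprime hgcd, pow_one] at hgcd1
      have hreq : r12 = r13 := by
        rw [hwdef] at hgcd1
        field_simp at hgcd1
        exact hgcd1
      rw [hr12, hr13] at hreq
      linear_combination hreq
  apply aux_card_le_two
  rintro ⟨x, hx⟩ ⟨y, hy⟩ ⟨z, hz⟩
  rcases main x y z hx hy hz with h | h | h
  · exact Or.inl (Subtype.ext h)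
  · exact Or.inr (Or.inl (Subtype.ext h))
  · exact Or.inr (Or.inr (Subtype.ext h))
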